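/- Let F = ℤ/2ℤ and let · be a bilinear multiplication on F × F that is not identically zero, is endo-commutative ((x·x)·(y·y) = (x·y)·(x·y) for all x, y) and is curled (for every x there exists λ ∈ F with x·x = λ • x). Then (F × F, ·) is isomorphic to exactly one of the following seven algebras, given by their matrices of structure constants: ((0, 0, 0, 0), (0, 1, 1, 0)); ((1, 0, 0, 0), (0, 1, 0, 0)); ((0, 1, 1, 0), (0, 0, 1, 1)); ((1, 1, 1, 0), (0, 0, 0, 1)); ((1, 0, 0, 0), (0, 0, 1, 0)); ((0, 1, 1, 0), (0, 1, 0, 1)); ((1, 1, 1, 0), (0, 1, 1, 1)). Here 'exactly one' means in addition that these seven algebras are pairwise non-isomorphic. -/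

import Mathlib

/-- The bilinear multiplication on `F × F` determined by the matrix of structure
constants `((a1, a2, a3, a4), (b1, b2, b3, b4))`. -/
def scMul {F : Type*} [Field F] (a1 a2 a3 a4 b1 b2 b3 b4 : F) (x y : F × F) : F × F :=
  (a1 * x.1 * y.1 + a2 * x.1 * y.2 + a3 * x.2 * y.1 + a4 * x.2 * y.2,
   b1 * x.1 * y.1 + b2 * x.1 * y.2 + b3 * x.2 * y.1 + b4 * x.2 * y.2)

/-- A multiplication `m` on `F × F` is endo-commutative if `(x·x)·(y·y) = (x·y)·(x·y)`. -/
def IsEndoCommutative {F : Type*} [Field F] (m : F × F → F × F → F × F) : Prop :=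
  ∀ x y : F × F, m (m x x) (m y y) = m (m x y) (m x y)

/-- A multiplication `m` on `F × F` is curled if every square `x·x` is a scalar
multiple of `x`. -/
def IsCurled {F : Type*} [Field F] (m : F × F → F × F → F × F) : Prop :=
  ∀ x : F × F, ∃ lam : F, m x x = lam • x

/-- `m` is bilinear (linear in each argument). -/
def IsBilinearMul {F : Type*} [Field F] (m : F × F → F × F → F × F) : Prop :=
  (∀ (a : F) (x x' y : F × F), m (a • x + x') y = a • m x y + m x' y) ∧
  (∀ (a : F) (x y y' : F × F), m x (a • y + y') = a • m x y + m x y')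

/-- Two multiplications on `F × F` are isomorphic if some `F`-linear
equivalence `g` of `F × F` satisfies `g (x·y) = g x ∘ g y`. -/
def AlgIso {F : Type*} [Field F] (m₁ m₂ : F × F → F × F → F × F) : Prop :=
  ∃ g : (F × F) ≃ₗ[F] F × F, ∀ x y, g (m₁ x y) = m₂ (g x) (g y)

/-- The seven endo-commutative curled algebras over `ℤ/2ℤ` (Theorem 13). -/
def ecCurledFamilyZ2 : Fin 7 → (ZMod 2 × ZMod 2 → ZMod 2 × ZMod 2 → ZMod 2 × ZMod 2)
  | 0 => scMul 0 0 0 0 0 1 1 0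
  | 1 => scMul 1 0 0 0 0 1 0 0
  | 2 => scMul 0 1 1 0 0 0 1 1
  | 3 => scMul 1 1 1 0 0 0 0 1
  | 4 => scMul 1 0 0 0 0 0 1 0
  | 5 => scMul 0 1 1 0 0 1 0 1
  | 6 => scMul 1 1 1 0 0 1 1 1

/-- The linear map on `F × F` sending the standard basis vectors to `u` and `v`. -/
def lin2 {F : Type*} [Field F] (u v : F × F) (z : F × F) : F × F :=
  (z.1 * u.1 + z.2 * v.1, z.1 * u.2 + z.2 * v.2)

/-- A concrete (decidable, over a finite field) reformulation of `AlgIso`. -/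
def AlgIso' {F : Type*} [Field F] (m₁ m₂ : F × F → F × F → F × F) : Prop :=
  ∃ u v : F × F, u.1 * v.2 - u.2 * v.1 ≠ 0 ∧
    ∀ x y, lin2 u v (m₁ x y) = m₂ (lin2 u v x) (lin2 u v y)

/-- Every bilinear multiplication on `F × F` is of the form `scMul a1 ... b4`. -/
lemma repr_scMul {F : Type*} [Field F] (m : F × F → F × F → F × F)
    (hbil : IsBilinearMul m) :
    m = scMul (m (1,0) (1,0)).1 (m (1,0) (0,1)).1 (m (0,1) (1,0)).1 (m (0,1) (0,1)).1
      (m (1,0) (1,0)).2 (m (1,0) (0,1)).2 (m (0,1) (1,0)).2 (m (0,1) (0,1)).2 := by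
  obtain ⟨hl, hr⟩ := hbil
  have h0l : ∀ y, m 0 y = 0 := by
    intro y
    have h := hl 1 0 0 y
    simp only [one_smul, add_zero] at h
    rw [left_eq_add] at h
    exact h
  have h0r : ∀ x, m x 0 = 0 := by
    intro x
    have h := hr 1 x 0 0
    simp only [one_smul, add_zero] at h
    rw [left_eq_add] at h
    exact h
  have hsl : ∀ (a : F) x y, m (a • x) y = a • m x y := by
    intro a x y
    have h := hl a x 0 y
    simpa [h0l] using h
  have hsr : ∀ (a : F) x y, m x (a • y) = a • m x y := by
    intro a x y
    have h := hr a x y 0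
    simpa [h0r] using h
  have hx : ∀ (x y : F × F), m x y = x.1 • m (1,0) y + x.2 • m (0,1) y := by
    intro x y
    have h2 : (x.1 • ((1:F),(0:F)) + x.2 • ((0:F),(1:F))) = x := by ext <;> simp
    have h1 := hl x.1 (1,0) (x.2 • ((0:F),(1:F))) y
    rw [h2] at h1
    rw [h1, hsl]
  have hy : ∀ (u y : F × F), m u y = y.1 • m u (1,0) + y.2 • m u (0,1) := by
    intro u y
    have h2 : (y.1 • ((1:F),(0:F)) + y.2 • ((0:F),(1:F))) = y := by ext <;> simp
    have h1 := hr y.1 u (1,0) (y.2 • ((0:F),(1:F)))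
    rw [h2] at h1
    rw [h1, hsr]
  funext x y
  rw [hx x y, hy (1,0) y, hy (0,1) y]
  ext <;> simp [scMul, Prod.smul_fst, Prod.smul_snd, smul_eq_mul] <;> ring

lemma algIso_iff {F : Type*} [Field F] (m₁ m₂ : F × F → F × F → F × F) :
    AlgIso m₁ m₂ ↔ AlgIso' m₁ m₂ := by
  constructor
  · rintro ⟨g, hg⟩
    set u := g (1,0) with hu
    set v := g (0,1) with hv
    have hgl : ∀ x : F × F, g x = lin2 u v x := by
      intro x
      have h2 : (x.1 • ((1:F),(0:F)) + x.2 • ((0:F),(1:F))) = x := by ext <;> simp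
      calc g x = g (x.1 • ((1:F),(0:F)) + x.2 • ((0:F),(1:F))) := by rw [h2]
        _ = x.1 • u + x.2 • v := by rw [map_add, map_smul, map_smul]
        _ = lin2 u v x := by ext <;> simp [lin2, mul_comm]
    refine ⟨u, v, ?_, ?_⟩
    · intro hd
      have h1 : g (v.2, -u.2) = 0 := by
        rw [hgl]
        have : v.2 * u.1 + -u.2 * v.1 = 0 := by linear_combination hd
        ext <;> simp [lin2] <;> [linear_combination this; ring]
      have h2 : g (-v.1, u.1) = 0 := by
        rw [hgl]
        have : -v.1 * u.2 + u.1 * v.2 = 0 := by linear_combination hd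
        ext <;> simp [lin2] <;> [ring; linear_combination this]
      have e1 : ((v.2, -u.2) : F × F) = 0 := by
        have := g.injective (h1.trans (map_zero g).symm)
        exact this
      have e2 : ((-v.1, u.1) : F × F) = 0 := by
        have := g.injective (h2.trans (map_zero g).symm)
        exact this
      have hu1 : u.1 = 0 := congrArg Prod.snd e2
      have hu2 : u.2 = 0 := by
        have := congrArg Prod.snd e1
        simpa using this
      have : ((1:F),(0:F)) = 0 := by
        apply g.injective
        rw [map_zero, ← hu]
        ext <;> simp [hu1, hu2]
      exact one_ne_zero (congrArg Prod.fst this)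
    · intro x y
      rw [← hgl, ← hgl, ← hgl, hg]
  · rintro ⟨u, v, hd, h⟩
    refine ⟨{ toFun := lin2 u v
              map_add' := by intro a b; ext <;> simp [lin2] <;> ring
              map_smul' := by intro a b; ext <;> simp [lin2, Prod.smul_fst, Prod.smul_snd, smul_eq_mul] <;> ring
              invFun := fun w => ((w.1 * v.2 - w.2 * v.1) / (u.1 * v.2 - u.2 * v.1),
                (u.1 * w.2 - u.2 * w.1) / (u.1 * v.2 - u.2 * v.1))
              left_inv := ?_
              right_inv := ?_ }, h⟩
    · intro z
      have hd' : u.1 * v.2 - v.1 * u.2 ≠ 0 := by rwa [mul_comm v.1]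
      have hd'' : v.2 * u.1 - v.1 * u.2 ≠ 0 := by rwa [mul_comm v.2, mul_comm v.1]
      ext <;> simp only [lin2] <;> field_simp <;> ring
    · intro w
      have hd' : u.1 * v.2 - v.1 * u.2 ≠ 0 := by rwa [mul_comm v.1]
      have hd'' : v.2 * u.1 - v.1 * u.2 ≠ 0 := by rwa [mul_comm v.2, mul_comm v.1]
      ext <;> simp only [lin2] <;> field_simp <;> ring

set_option maxHeartbeats 1000000 in
lemma pairwise_noniso :
    ∀ i j : Fin 7, i ≠ j → ¬ AlgIso' (ecCurledFamilyZ2 i) (ecCurledFamilyZ2 j) := by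
  unfold AlgIso'
  decide

set_option maxHeartbeats 4000000 in
set_option synthInstance.maxHeartbeats 1000000 in
set_option synthInstance.maxSize 2048 in
lemma classify : ∀ a1 a2 a3 a4 b1 b2 b3 b4 : ZMod 2,
    (¬ ∀ x y, scMul a1 a2 a3 a4 b1 b2 b3 b4 x y = 0) →
    (∀ x y, scMul a1 a2 a3 a4 b1 b2 b3 b4 (scMul a1 a2 a3 a4 b1 b2 b3 b4 x x) (scMul a1 a2 a3 a4 b1 b2 b3 b4 y y)
      = scMul a1 a2 a3 a4 b1 b2 b3 b4 (scMul a1 a2 a3 a4 b1 b2 b3 b4 x y) (scMul a1 a2 a3 a4 b1 b2 b3 b4 x y)) →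
    (∀ x, ∃ lam : ZMod 2, scMul a1 a2 a3 a4 b1 b2 b3 b4 x x = lam • x) →
    ∃! i : Fin 7, AlgIso' (scMul a1 a2 a3 a4 b1 b2 b3 b4) (ecCurledFamilyZ2 i) := by
  unfold AlgIso' ExistsUnique
  beta_reduce
  decide

/-- over `F = ℤ/2ℤ`, any nonzero bilinear endo-commutative curled
multiplication on `F × F` is isomorphic to exactly one of the seven algebras of
`ecCurledFamilyZ2`, and those seven algebras are pairwise non-isomorphic. -/
theorem stmt_18 (m : ZMod 2 × ZMod 2 → ZMod 2 × ZMod 2 → ZMod 2 × ZMod 2)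
    (hbil : IsBilinearMul m) (hnz : ¬ ∀ x y, m x y = 0)
    (hec : ∀ x y, m (m x x) (m y y) = m (m x y) (m x y))
    (hcur : IsCurled m) :
    (∃! i : Fin 7, AlgIso m (ecCurledFamilyZ2 i)) ∧
      ∀ i j : Fin 7, i ≠ j → ¬ AlgIso (ecCurledFamilyZ2 i) (ecCurledFamilyZ2 j) := by
  have hm := repr_scMul m hbil
  constructor
  · rw [hm] at hnz hec hcur
    simp only [algIso_iff]
    rw [hm]
    exact classify _ _ _ _ _ _ _ _ hnz hec hcur
  · intro i j hij hiso
    exact pairwise_noniso i j hij ((algIso_iff _ _).mp hiso)
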